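/- arXiv:2311.14261 — 2 statements merged into one kernel-verified Lean document; each statement's English description precedes it below -/
import Mathlib

section
/- Let f : L → M be a Scott-continuous map between well-filtered dcpos. Then the map Q(f) : Q(L) → Q(M) defined by Q(f)(K) = ↑f(K) (the upper closure of the image of K) is Scott-continuous, where Q(L) and Q(M) carry the reverse inclusion order. -/
universe u

/-- A subset is Scott open: an upper set inaccessible by directed suprema. -/
def ScottOpen {α : Type u} [Preorder α] (U : Set α) : Prop :=
  IsUpperSet U ∧ ∀ d : Set α, d.Nonempty → DirectedOn (· ≤ ·) d →
    ∀ a : α, IsLUB d a → a ∈ U → (d ∩ U).Nonempty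

/-- A subset is Scott closed: a lower set closed under directed suprema. -/
def ScottClosed {α : Type u} [Preorder α] (C : Set α) : Prop :=
  IsLowerSet C ∧ ∀ d : Set α, d ⊆ C → d.Nonempty → DirectedOn (· ≤ ·) d →
    ∀ a : α, IsLUB d a → a ∈ C

/-- A dcpo: every nonempty directed subset has a supremum. -/
def IsDcpo (α : Type u) [Preorder α] : Prop :=
  ∀ d : Set α, d.Nonempty → DirectedOn (· ≤ ·) d → ∃ a, IsLUB d a

/-- Compactness with respect to the Scott topology. -/
def ScottCompact {α : Type u} [Preorder α] (K : Set α) : Prop :=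
  ∀ 𝒰 : Set (Set α), (∀ U ∈ 𝒰, ScottOpen U) → K ⊆ ⋃₀ 𝒰 →
    ∃ F : Set (Set α), F ⊆ 𝒰 ∧ F.Finite ∧ K ⊆ ⋃₀ F

/-- Well-filteredness of the Scott topology of a poset. -/
def WellFiltered (α : Type u) [Preorder α] : Prop :=
  ∀ 𝒞 : Set (Set α), 𝒞.Nonempty →
    (∀ K ∈ 𝒞, ScottCompact K ∧ IsUpperSet K) →
    DirectedOn (fun A B : Set α => B ⊆ A) 𝒞 →
    ∀ U : Set α, ScottOpen U → ⋂₀ 𝒞 ⊆ U → ∃ K ∈ 𝒞, K ⊆ U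

/-- The Hoare power construction: Scott closed subsets ordered by inclusion. -/
structure HPoset (α : Type u) [Preorder α] where
  carrier : Set α
  closed' : ScottClosed carrier

instance {α : Type u} [Preorder α] : PartialOrder (HPoset α) where
  le A B := A.carrier ⊆ B.carrier
  le_refl _ := subset_rfl
  le_trans _ _ _ h h' := Set.Subset.trans h h'
  le_antisymm A B h h' := by
    cases A; cases B
    simp only [HPoset.mk.injEq]
    exact subset_antisymm h h'

/-- The Smyth power construction: nonempty Scott compact saturated subsets
ordered by reverse inclusion. -/
structure QPoset (α : Type u) [Preorder α] where
  carrier : Set α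
  nonempty' : carrier.Nonempty
  compact' : ScottCompact carrier
  upper' : IsUpperSet carrier

instance {α : Type u} [Preorder α] : PartialOrder (QPoset α) where
  le K K' := K'.carrier ⊆ K.carrier
  le_refl _ := subset_rfl
  le_trans _ _ _ h h' := Set.Subset.trans h' h
  le_antisymm K K' h h' := by
    cases K; cases K'
    simp only [QPoset.mk.injEq]
    exact subset_antisymm h' h

/-- The lattice of Scott open subsets ordered by inclusion. -/
structure OpenSet (α : Type u) [Preorder α] where
  carrier : Set α
  open' : ScottOpen carrier

instance {α : Type u} [Preorder α] : PartialOrder (OpenSet α) where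
  le A B := A.carrier ⊆ B.carrier
  le_refl _ := subset_rfl
  le_trans _ _ _ h h' := Set.Subset.trans h h'
  le_antisymm A B h h' := by
    cases A; cases B
    simp only [OpenSet.mk.injEq]
    exact subset_antisymm h h'

section Aux

variable {α β : Type u} [Preorder α] [Preorder β]

lemma scottOpen_empty : ScottOpen (∅ : Set α) :=
  ⟨fun _ _ _ h => h, fun _ _ _ _ _ h => absurd h (Set.notMem_empty _)⟩

lemma scottOpen_sUnion {𝒰 : Set (Set α)} (h : ∀ U ∈ 𝒰, ScottOpen U) :
    ScottOpen (⋃₀ 𝒰) := by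
  constructor
  · intro x y hxy hx
    obtain ⟨U, hU, hxU⟩ := hx
    exact ⟨U, hU, (h U hU).1 hxy hxU⟩
  · intro d hd hdir a ha haU
    obtain ⟨U, hU, haUU⟩ := haU
    obtain ⟨x, hxd, hxU⟩ := (h U hU).2 d hd hdir a ha haUU
    exact ⟨x, hxd, U, hU, hxU⟩

lemma scottOpen_preimage {f : α → β} (hf : ScottContinuous f) {U : Set β}
    (hU : ScottOpen U) : ScottOpen (f ⁻¹' U) := by
  constructor
  · intro x y hxy hx
    exact hU.1 (hf.monotone hxy) hx
  · intro d hd hdir a ha haU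
    have himg : DirectedOn (· ≤ ·) (f '' d) := by
      rintro _ ⟨x, hx, rfl⟩ _ ⟨x', hx', rfl⟩
      obtain ⟨z, hz, hz1, hz2⟩ := hdir x hx x' hx'
      exact ⟨f z, ⟨z, hz, rfl⟩, hf.monotone hz1, hf.monotone hz2⟩
    obtain ⟨y, hyd, hyU⟩ := hU.2 (f '' d) (hd.image f) himg (f a) (hf hd hdir ha) haU
    obtain ⟨x, hx, rfl⟩ := hyd
    exact ⟨x, hx, hyU⟩

lemma scottOpen_compl_le (y : α) : ScottOpen {z : α | z ≤ y}ᶜ := by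
  constructor
  · intro a b hab ha hb
    exact ha (le_trans hab hb)
  · intro d hd hdir a ha haU
    by_contra h
    rw [Set.not_nonempty_iff_eq_empty] at h
    apply haU
    refine ha.2 fun x hx => ?_
    by_contra hxy
    exact absurd (Set.mem_inter hx hxy) (h ▸ Set.notMem_empty x)

lemma scottCompact_upimage {f : α → β} (hf : ScottContinuous f) {K : Set α}
    (hK : ScottCompact K) : ScottCompact {y | ∃ x ∈ K, f x ≤ y} := by
  classical
  intro 𝒰 h𝒰 hcov
  have hKcov : K ⊆ ⋃₀ ((fun U => f ⁻¹' U) '' 𝒰) := by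
    intro x hx
    obtain ⟨U, hU, hfx⟩ := hcov ⟨x, hx, le_refl _⟩
    exact ⟨f ⁻¹' U, ⟨U, hU, rfl⟩, hfx⟩
  obtain ⟨F, hF𝒰, hFfin, hFcov⟩ := hK _
    (by rintro V ⟨U, hU, rfl⟩; exact scottOpen_preimage hf (h𝒰 U hU)) hKcov
  set g : Set α → Set β := fun V =>
    if h : ∃ U ∈ 𝒰, f ⁻¹' U = V then h.choose else ∅ with hg
  have hgmem : ∀ V ∈ F, g V ∈ 𝒰 ∧ f ⁻¹' (g V) = V := by
    intro V hV
    have h : ∃ U ∈ 𝒰, f ⁻¹' U = V := hF𝒰 hV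
    simp only [hg, dif_pos h]
    exact ⟨h.choose_spec.1, h.choose_spec.2⟩
  refine ⟨g '' F, ?_, hFfin.image g, ?_⟩
  · rintro _ ⟨V, hV, rfl⟩
    exact (hgmem V hV).1
  · rintro y ⟨x, hx, hxy⟩
    obtain ⟨V, hV, hxV⟩ := hFcov hx
    have hfx : f x ∈ g V := by rw [← (hgmem V hV).2] at hxV; exact hxV
    exact ⟨g V, ⟨V, hV, rfl⟩, (h𝒰 (g V) (hgmem V hV).1).1 hxy hfx⟩

lemma directed_inter (hw : WellFiltered α) {𝒞 : Set (Set α)} (hne : 𝒞.Nonempty)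
    (hmem : ∀ K ∈ 𝒞, ScottCompact K ∧ IsUpperSet K)
    (hKne : ∀ K ∈ 𝒞, K.Nonempty)
    (hdir : DirectedOn (fun A B : Set α => B ⊆ A) 𝒞) :
    (⋂₀ 𝒞).Nonempty ∧ ScottCompact (⋂₀ 𝒞) ∧ IsUpperSet (⋂₀ 𝒞) := by
  refine ⟨?_, ?_, ?_⟩
  · by_contra h
    rw [Set.not_nonempty_iff_eq_empty] at h
    obtain ⟨K, hK, hKsub⟩ := hw 𝒞 hne hmem hdir ∅ scottOpen_empty (by rw [h])
    obtain ⟨k, hk⟩ := hKne K hK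
    exact hKsub hk
  · intro 𝒰 h𝒰 hcov
    obtain ⟨K, hK, hKsub⟩ := hw 𝒞 hne hmem hdir (⋃₀ 𝒰) (scottOpen_sUnion h𝒰) hcov
    obtain ⟨F, hF𝒰, hFfin, hFcov⟩ := (hmem K hK).1 𝒰 h𝒰 hKsub
    exact ⟨F, hF𝒰, hFfin, fun x hx => hFcov (Set.mem_sInter.1 hx K hK)⟩
  · intro x y hxy hx K hK
    exact (hmem K hK).2 hxy (hx K hK)

end Aux

theorem smyth_functor_scottContinuous {L M : Type u} [PartialOrder L] [PartialOrder M]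
    (hdL : IsDcpo L) (hwL : WellFiltered L) (hdM : IsDcpo M) (hwM : WellFiltered M)
    (f : L → M) (hf : ScottContinuous f) :
    ∃ Qf : QPoset L → QPoset M,
      (∀ K : QPoset L, (Qf K).carrier = {y : M | ∃ x ∈ K.carrier, f x ≤ y}) ∧
      ScottContinuous Qf := by
  classical
  let img : QPoset L → Set M := fun K => {y | ∃ x ∈ K.carrier, f x ≤ y}
  have himg_ne : ∀ K, (img K).Nonempty := fun K => by
    obtain ⟨x, hx⟩ := K.nonempty'
    exact ⟨f x, x, hx, le_refl _⟩
  have himg_up : ∀ K, IsUpperSet (img K) := by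
    rintro K y y' hyy' ⟨x, hx, hle⟩
    exact ⟨x, hx, hle.trans hyy'⟩
  have himg_cpt : ∀ K, ScottCompact (img K) :=
    fun K => scottCompact_upimage hf K.compact'
  refine ⟨fun K => ⟨img K, himg_ne K, himg_cpt K, himg_up K⟩, fun K => rfl, ?_⟩
  set Qf : QPoset L → QPoset M :=
    fun K => ⟨img K, himg_ne K, himg_cpt K, himg_up K⟩ with hQf
  have hQfmono : Monotone Qf := by
    rintro K K' h y ⟨x, hx, hle⟩
    exact ⟨x, h hx, hle⟩
  intro d hd hdir a ha
  set 𝒞 : Set (Set L) := QPoset.carrier '' d with h𝒞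
  have h𝒞ne : 𝒞.Nonempty := hd.image _
  have h𝒞mem : ∀ K ∈ 𝒞, ScottCompact K ∧ IsUpperSet K := by
    rintro _ ⟨K, hK, rfl⟩; exact ⟨K.compact', K.upper'⟩
  have h𝒞Kne : ∀ K ∈ 𝒞, K.Nonempty := by
    rintro _ ⟨K, hK, rfl⟩; exact K.nonempty'
  have h𝒞dir : DirectedOn (fun A B : Set L => B ⊆ A) 𝒞 := by
    rintro _ ⟨K, hK, rfl⟩ _ ⟨K', hK', rfl⟩
    obtain ⟨c, hc, hc1, hc2⟩ := hdir K hK K' hK'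
    exact ⟨c.carrier, ⟨c, hc, rfl⟩, hc1, hc2⟩
  obtain ⟨hIne, hIcpt, hIup⟩ := directed_inter hwL h𝒞ne h𝒞mem h𝒞Kne h𝒞dir
  have hacar : a.carrier = ⋂₀ 𝒞 := by
    apply subset_antisymm
    · intro x hx
      rintro _ ⟨K, hK, rfl⟩
      exact ha.1 hK hx
    · have hub : (⟨⋂₀ 𝒞, hIne, hIcpt, hIup⟩ : QPoset L) ∈ upperBounds d := by
        intro K hK
        exact fun x hx => hx K.carrier ⟨K, hK, rfl⟩
      exact ha.2 hub
  constructor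
  · rintro _ ⟨K, hK, rfl⟩
    exact hQfmono (ha.1 hK)
  · intro b hb
    intro y hy
    show ∃ x ∈ a.carrier, f x ≤ y
    rw [hacar]
    by_contra hcon
    push_neg at hcon
    have hsub : ⋂₀ 𝒞 ⊆ f ⁻¹' {z : M | z ≤ y}ᶜ := by
      intro x hx
      exact hcon x hx
    obtain ⟨_, ⟨K, hK, rfl⟩, hKsub⟩ := hwL 𝒞 h𝒞ne h𝒞mem h𝒞dir _
      (scottOpen_preimage hf (scottOpen_compl_le y)) hsub
    have hyK : y ∈ img K := hb ⟨K, hK, rfl⟩ hy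
    obtain ⟨x, hx, hle⟩ := hyK
    exact hKsub hx hle
end

section
/- Let L be a well-filtered dcpo such that φ : H(Q(L)) → Q(H(L)) and ψ : Q(H(L)) → H(Q(L)) are mutually inverse isomorphisms. Then the Scott topology on Q(L) is contained in the upper Vietoris topology. -/
universe u

/-- The map φ : H(Q(L)) → Q(H(L)) on underlying subsets. -/
def phiMap {L : Type u} [Preorder L] (𝒜 : Set (QPoset L)) : Set (HPoset L) :=
  {A : HPoset L | ∀ K ∈ 𝒜, (A.carrier ∩ K.carrier).Nonempty}

/-- The map ψ : Q(H(L)) → H(Q(L)) on underlying subsets. -/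
def psiMap {L : Type u} [Preorder L] (𝒦 : Set (HPoset L)) : Set (QPoset L) :=
  {K : QPoset L | ∀ A ∈ 𝒦, (K.carrier ∩ A.carrier).Nonempty}

lemma scottClosed_compl_of_open {α : Type u} [Preorder α] {U : Set α}
    (h : ScottOpen U) : ScottClosed Uᶜ := by
  refine ⟨h.1.compl, ?_⟩
  intro d hdC hne hdir a hlub ha
  obtain ⟨x, hxd, hxU⟩ := h.2 d hne hdir a hlub ha
  exact hdC hxd hxU

lemma scottOpen_compl_of_closed {α : Type u} [Preorder α] {C : Set α}
    (h : ScottClosed C) : ScottOpen Cᶜ := by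
  refine ⟨h.1.compl, ?_⟩
  intro d hne hdir a hlub ha
  by_contra hempty
  rw [Set.not_nonempty_iff_eq_empty] at hempty
  have hdC : d ⊆ C := by
    intro x hx
    by_contra hxC
    exact absurd hempty (Set.nonempty_iff_ne_empty.mp ⟨x, hx, hxC⟩)
  exact ha (h.2 d hdC hne hdir a hlub)

theorem iso_implies_scott_le_upperVietoris {L : Type u} [PartialOrder L]
    (hd : IsDcpo L) (hw : WellFiltered L)
    (h1 : ∀ 𝒜 : Set (QPoset L), ScottClosed 𝒜 → psiMap (phiMap 𝒜) = 𝒜)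
    (h2 : ∀ 𝒦 : Set (HPoset L), 𝒦.Nonempty → ScottCompact 𝒦 → IsUpperSet 𝒦 →
      phiMap (psiMap 𝒦) = 𝒦) :
    ∀ 𝒰 : Set (QPoset L), ScottOpen 𝒰 → ∀ K ∈ 𝒰, ∃ U : Set L, ScottOpen U ∧
      K.carrier ⊆ U ∧ {K' : QPoset L | K'.carrier ⊆ U} ⊆ 𝒰 := by
  intro 𝒰 hU K hK
  have heq := h1 𝒰ᶜ (scottClosed_compl_of_open hU)
  have hKmem : K ∉ psiMap (phiMap 𝒰ᶜ) := by
    rw [heq]; simpa using hK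
  simp only [psiMap, Set.mem_setOf_eq, not_forall] at hKmem
  obtain ⟨A, hA, hKA⟩ := hKmem
  refine ⟨A.carrierᶜ, scottOpen_compl_of_closed A.closed', ?_, ?_⟩
  · intro x hx hxA
    exact hKA ⟨x, hx, hxA⟩
  · intro K' hK'sub
    by_contra hmem
    have hK'c : K' ∈ psiMap (phiMap 𝒰ᶜ) := by rw [heq]; exact hmem
    obtain ⟨x, hx, hxA⟩ := hK'c A hA
    exact hK'sub hx hxA
end
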